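/- For every pair Φ = (u,v) ∈ C_γ^−, the integral K_B^ε(Φ)(t) := ∫_{−∞}^t e^{B(t−s)} g(u(s)+η(s), v(s)+ξ(s)) ds converges absolutely for every t ≤ 0, defines a continuous function on (−∞,0], and satisfies ‖K_B^ε(Φ)‖_γ^− ≤ C_B + (L_g/(γ_B − γ))·‖Φ‖_γ^−, where C_B := L_g C_g/γ_B + (L_g/(γ_B − γ))(‖η‖_γ^− + ‖ξ‖_γ^−). -/

import Mathlib

open MeasureTheory Set Filter

noncomputable section

/-- `ℝ^n` with the Euclidean norm. -/
abbrev Vec (n : ℕ) := EuclideanSpace ℝ (Fin n)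

/-- Action of an `n × n` real matrix on `ℝ^n`. -/
noncomputable def mApply {n : ℕ} (M : Matrix (Fin n) (Fin n) ℝ) (x : Vec n) : Vec n :=
  Matrix.toEuclideanLin M x

/-- The matrix exponential `e^{tA}`. -/
noncomputable def expM {n : ℕ} (A : Matrix (Fin n) (Fin n) ℝ) (t : ℝ) :
    Matrix (Fin n) (Fin n) ℝ :=
  NormedSpace.exp (t • A)

/-- The norm `‖u‖_γ^- = sup_{t ≤ 0} e^{γ t} ‖u t‖` on `C_γ^-`. -/
noncomputable def cNorm {n : ℕ} (γ : ℝ) (u : ℝ → Vec n) : ℝ :=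
  sSup ((fun t => Real.exp (γ * t) * ‖u t‖) '' Iic (0:ℝ))

/-- Membership in the Banach space `C_γ^-`: continuity on `(-∞, 0]` together with
finiteness of the norm `sup_{t ≤ 0} e^{γ t} ‖u t‖`. -/
def memCneg {n : ℕ} (γ : ℝ) (u : ℝ → Vec n) : Prop :=
  ContinuousOn u (Iic 0) ∧
    BddAbove ((fun t => Real.exp (γ * t) * ‖u t‖) '' Iic (0:ℝ))

/-- The `A`-component of the Lyapunov–Perron map:
`K_A^ε(Φ)(t) = e^{εAt} u₀ + ε ∫_0^t e^{εA(t-s)} f(u(s)+η(s), v(s)+ξ(s)) ds`. -/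
noncomputable def KA {n : ℕ} (A : Matrix (Fin n) (Fin n) ℝ) (ε : ℝ) (u₀ : Vec n)
    (f : Vec n → Vec n → Vec n) (η ξ u v : ℝ → Vec n) (t : ℝ) : Vec n :=
  mApply (expM A (ε * t)) u₀ +
    ε • ∫ s in (0:ℝ)..t, mApply (expM A (ε * (t - s))) (f (u s + η s) (v s + ξ s))

/-- The `B`-component of the Lyapunov–Perron map:
`K_B^ε(Φ)(t) = ∫_{-∞}^t e^{B(t-s)} g(u(s)+η(s), v(s)+ξ(s)) ds`. -/
noncomputable def KB {n : ℕ} (B : Matrix (Fin n) (Fin n) ℝ)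
    (g : Vec n → Vec n → Vec n) (η ξ u v : ℝ → Vec n) (t : ℝ) : Vec n :=
  ∫ s in Iic t, mApply (expM B (t - s)) (g (u s + η s) (v s + ξ s))

/- ### Auxiliary lemmas -/

lemma LP.integrableOn_exp_mul (c t : ℝ) (hc : 0 < c) :
    IntegrableOn (fun s => Real.exp (c * s)) (Iic t) := by
  have h := exp_neg_integrableOn_Ioi (-t) hc
  have h2 := (MeasurePreserving.integrableOn_comp_preimage
      (Measure.measurePreserving_neg (volume : Measure ℝ))
      (Homeomorph.neg ℝ).measurableEmbedding).2 h
  have hset : ((Neg.neg : ℝ → ℝ) ⁻¹' Ioi (-t)) = Iio t := by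
    ext x; simp [neg_lt]
  rw [hset] at h2
  have h3 : IntegrableOn (fun x : ℝ => Real.exp (c * x)) (Iio t) := by
    have : ((fun x : ℝ => Real.exp (-c * x)) ∘ (Neg.neg : ℝ → ℝ)) =
        fun x : ℝ => Real.exp (c * x) := by
      funext x; simp [Function.comp, neg_mul, mul_neg]
    rwa [this] at h2
  exact h3.congr_set_ae Iio_ae_eq_Iic.symm

open Topology in
lemma LP.integral_exp_mul (c t : ℝ) (hc : 0 < c) :
    ∫ s in Iic t, Real.exp (c * s) = Real.exp (c * t) / c := by
  have hderiv : ∀ x ∈ Iic t, HasDerivAt (fun y => Real.exp (c * y) / c)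
      (Real.exp (c * x)) x := by
    intro x _
    have h : HasDerivAt (fun y : ℝ => c * y) c x := by
      simpa using (hasDerivAt_id x).const_mul c
    have h2 := h.exp.div_const c
    simpa [mul_div_assoc, mul_div_cancel_right₀ _ hc.ne'] using h2
  have htend : Tendsto (fun y => Real.exp (c * y) / c) atBot (𝓝 0) := by
    have h1 : Tendsto (fun y : ℝ => c * y) atBot atBot :=
      Tendsto.const_mul_atBot hc tendsto_id
    have := (Real.tendsto_exp_atBot.comp h1).div_const c
    simpa using this
  have := integral_Iic_of_hasDerivAt_of_tendsto' hderiv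
    (LP.integrableOn_exp_mul c t hc) htend
  simpa using this

lemma LP.continuous_mApply {n : ℕ} :
    Continuous fun p : Matrix (Fin n) (Fin n) ℝ × Vec n => mApply p.1 p.2 := by
  have hrepr : (fun p : Matrix (Fin n) (Fin n) ℝ × Vec n => mApply p.1 p.2) =
      fun p => (WithLp.equiv 2 (Fin n → ℝ)).symm
        (Matrix.mulVec p.1 ((WithLp.equiv 2 (Fin n → ℝ)) p.2)) := by
    funext p
    simp [mApply, Matrix.toEuclideanLin_apply]
  rw [hrepr]
  have h1 : Continuous fun p : Matrix (Fin n) (Fin n) ℝ × (Fin n → ℝ) =>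
      Matrix.mulVec p.1 p.2 := by
    apply continuous_pi
    intro i
    simp only [Matrix.mulVec, dotProduct]
    exact continuous_finset_sum _ fun j _ =>
      (((continuous_apply j).comp ((continuous_apply i).comp continuous_fst)).mul
        ((continuous_apply j).comp continuous_snd))
  exact (PiLp.continuous_toLp 2 (fun _ : Fin n => ℝ)).comp
    (h1.comp (continuous_fst.prodMk ((PiLp.continuous_ofLp 2 (fun _ : Fin n => ℝ)).comp
      continuous_snd)))

section
attribute [local instance] Matrix.linftyOpNormedAddCommGroup Matrix.linftyOpNormedRing
  Matrix.linftyOpNormedAlgebra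

lemma LP.continuous_expM {n : ℕ} (B : Matrix (Fin n) (Fin n) ℝ) :
    Continuous fun r : ℝ => expM B r := by
  have h : Continuous fun r : ℝ => r • B := continuous_id.smul continuous_const
  exact NormedSpace.exp_continuous.comp h

end

/-- absolute convergence, continuity and bound for the `B`-component of
the Lyapunov–Perron map on `C_γ^-`. -/
theorem statement1
    (n : ℕ) (hn : 0 < n)
    (B : Matrix (Fin n) (Fin n) ℝ) (γB : ℝ) (hγB : 0 < γB)
    (hB : ∀ t ≥ (0:ℝ), ∀ y : Vec n, ‖mApply (expM B t) y‖ ≤ Real.exp (-γB * t) * ‖y‖)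
    (γ ε : ℝ) (hγ : 0 < γ) (hγγB : γ < γB) (hε : 0 < ε)
    (g : Vec n → Vec n → Vec n) (Lg Cg : ℝ) (hLg : 0 < Lg) (hCg : 0 < Cg)
    (hgLip : ∀ x₁ y₁ x₂ y₂ : Vec n,
      ‖g x₁ y₁ - g x₂ y₂‖ ≤ Lg * (‖x₁ - x₂‖ + ‖y₁ - y₂‖))
    (hgGrow : ∀ x y : Vec n, ‖g x y‖ ≤ Lg * (Cg + ‖x‖ + ‖y‖))
    (η ξ : ℝ → Vec n) (hη : memCneg γ η) (hξ : memCneg γ ξ)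
    (u v : ℝ → Vec n) (hu : memCneg γ u) (hv : memCneg γ v) :
    (∀ t ≤ (0:ℝ),
        IntegrableOn (fun s => mApply (expM B (t - s)) (g (u s + η s) (v s + ξ s)))
          (Iic t) volume) ∧
      ContinuousOn (KB B g η ξ u v) (Iic 0) ∧
      ∀ t ≤ (0:ℝ),
        Real.exp (γ * t) * ‖KB B g η ξ u v t‖ ≤
          (Lg * Cg / γB + Lg / (γB - γ) * (cNorm γ η + cNorm γ ξ)) +
            Lg / (γB - γ) * (cNorm γ u + cNorm γ v) := by
  have hγγ' : (0:ℝ) < γB - γ := by linarith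
  -- basic facts about cNorm
  have key : ∀ w : ℝ → Vec n, memCneg γ w → ∀ s ≤ (0:ℝ),
      ‖w s‖ ≤ Real.exp (-(γ*s)) * cNorm γ w := by
    intro w hw s hs
    have h1 : Real.exp (γ*s) * ‖w s‖ ≤ cNorm γ w := le_csSup hw.2 ⟨s, hs, rfl⟩
    have h2 : (0:ℝ) < Real.exp (γ*s) := Real.exp_pos _
    have := mul_le_mul_of_nonneg_left h1 (inv_nonneg.2 h2.le)
    calc ‖w s‖ = (Real.exp (γ*s))⁻¹ * (Real.exp (γ*s) * ‖w s‖) := by field_simp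
    _ ≤ (Real.exp (γ*s))⁻¹ * cNorm γ w := this
    _ = Real.exp (-(γ*s)) * cNorm γ w := by rw [Real.exp_neg]
  have hw0 : ∀ w : ℝ → Vec n, memCneg γ w → 0 ≤ cNorm γ w := by
    intro w hw
    have h := le_csSup hw.2 ⟨0, self_mem_Iic, rfl⟩
    simp only [mul_zero, Real.exp_zero, one_mul] at h
    exact le_trans (norm_nonneg _) h
  set Mt : ℝ := cNorm γ u + cNorm γ v + cNorm γ η + cNorm γ ξ with hMt
  have hMt0 : 0 ≤ Mt := by
    have := hw0 u hu; have := hw0 v hv; have := hw0 η hη; have := hw0 ξ hξ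
    rw [hMt]; linarith
  -- growth bound on G
  have hGb : ∀ s ≤ (0:ℝ), ‖g (u s + η s) (v s + ξ s)‖ ≤
      Lg * (Cg + Real.exp (-(γ*s)) * Mt) := by
    intro s hs
    have h0 := hgGrow (u s + η s) (v s + ξ s)
    have h1 := key u hu s hs
    have h2 := key v hv s hs
    have h3 := key η hη s hs
    have h4 := key ξ hξ s hs
    have n1 : ‖u s + η s‖ ≤ ‖u s‖ + ‖η s‖ := norm_add_le _ _
    have n2 : ‖v s + ξ s‖ ≤ ‖v s‖ + ‖ξ s‖ := norm_add_le _ _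
    have hexp : Real.exp (-(γ*s)) * Mt = Real.exp (-(γ*s)) * cNorm γ u
        + Real.exp (-(γ*s)) * cNorm γ v + Real.exp (-(γ*s)) * cNorm γ η
        + Real.exp (-(γ*s)) * cNorm γ ξ := by rw [hMt]; ring
    calc ‖g (u s + η s) (v s + ξ s)‖ ≤ Lg * (Cg + ‖u s + η s‖ + ‖v s + ξ s‖) := h0
    _ ≤ Lg * (Cg + Real.exp (-(γ*s)) * Mt) := by
        apply mul_le_mul_of_nonneg_left _ hLg.le
        linarith
  -- continuity of G
  have hgcont : Continuous fun p : Vec n × Vec n => g p.1 p.2 := by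
    have hL : LipschitzWith (Real.toNNReal (2*Lg)) (fun p : Vec n × Vec n => g p.1 p.2) := by
      apply LipschitzWith.of_dist_le_mul
      intro p q
      have h := hgLip p.1 p.2 q.1 q.2
      have d1 : dist p.1 q.1 ≤ dist p q := by rw [Prod.dist_eq]; exact le_max_left _ _
      have d2 : dist p.2 q.2 ≤ dist p q := by rw [Prod.dist_eq]; exact le_max_right _ _
      rw [dist_eq_norm]
      calc ‖g p.1 p.2 - g q.1 q.2‖ ≤ Lg * (dist p.1 q.1 + dist p.2 q.2) := by
            rw [dist_eq_norm, dist_eq_norm]; exact h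
      _ ≤ (2*Lg) * dist p q := by nlinarith [dist_nonneg (x := p) (y := q)]
      _ = (Real.toNNReal (2*Lg) : ℝ) * dist p q := by
            rw [Real.coe_toNNReal _ (by positivity)]
    exact hL.continuous
  have hGc : ContinuousOn (fun s => g (u s + η s) (v s + ξ s)) (Iic (0:ℝ)) :=
    hgcont.comp_continuousOn ((hu.1.add hη.1).prodMk (hv.1.add hξ.1))
  -- continuity of integrand
  have hexpC : Continuous fun r : ℝ => expM B r := LP.continuous_expM B
  have happ := LP.continuous_mApply (n := n)
  have hintc : ∀ t ≤ (0:ℝ), ContinuousOn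
      (fun s => mApply (expM B (t - s)) (g (u s + η s) (v s + ξ s))) (Iic t) := by
    intro t ht
    have h1 : ContinuousOn (fun s : ℝ => expM B (t - s)) (Iic t) :=
      (hexpC.comp (continuous_const.sub continuous_id)).continuousOn
    have h2 : ContinuousOn (fun s => g (u s + η s) (v s + ξ s)) (Iic t) :=
      hGc.mono (Iic_subset_Iic.2 ht)
    apply Continuous.comp_continuousOn happ (h1.prodMk h2)
  -- pointwise norm bound on integrand
  have hbnd : ∀ t ≤ (0:ℝ), ∀ s ≤ t,
      ‖mApply (expM B (t - s)) (g (u s + η s) (v s + ξ s))‖ ≤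
        Real.exp (-γB*(t-s)) * (Lg * (Cg + Real.exp (-(γ*s)) * Mt)) := by
    intro t ht s hs
    calc ‖mApply (expM B (t - s)) (g (u s + η s) (v s + ξ s))‖
        ≤ Real.exp (-γB*(t-s)) * ‖g (u s + η s) (v s + ξ s)‖ :=
          hB (t-s) (by linarith) _
    _ ≤ Real.exp (-γB*(t-s)) * (Lg * (Cg + Real.exp (-(γ*s)) * Mt)) :=
          mul_le_mul_of_nonneg_left (hGb s (le_trans hs ht)) (Real.exp_pos _).le
  have hbnd_nonneg : ∀ a s : ℝ,
      0 ≤ Real.exp (-γB*(a-s)) * (Lg * (Cg + Real.exp (-(γ*s)) * Mt)) := by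
    intro a s
    have h1 : 0 ≤ Cg + Real.exp (-(γ*s)) * Mt :=
      add_nonneg hCg.le (mul_nonneg (Real.exp_pos _).le hMt0)
    exact mul_nonneg (Real.exp_pos _).le (mul_nonneg hLg.le h1)
  -- rewrite of bound function
  have heqf : ∀ a : ℝ, (fun s => Real.exp (-γB*(a-s)) * (Lg * (Cg + Real.exp (-(γ*s)) * Mt)))
      = fun s => (Real.exp (-γB*a) * (Lg*Cg)) * Real.exp (γB*s)
          + (Real.exp (-γB*a) * (Lg*Mt)) * Real.exp ((γB-γ)*s) := by
    intro a
    funext s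
    have e1 : Real.exp (-γB*(a-s)) = Real.exp (-γB*a) * Real.exp (γB*s) := by
      rw [← Real.exp_add]; congr 1; ring
    have e2 : Real.exp ((γB-γ)*s) = Real.exp (γB*s) * Real.exp (-(γ*s)) := by
      rw [← Real.exp_add]; congr 1; ring
    rw [e1, e2]; ring
  -- integrability of the bound
  have hbint : ∀ a t : ℝ, IntegrableOn
      (fun s => Real.exp (-γB*(a-s)) * (Lg * (Cg + Real.exp (-(γ*s)) * Mt))) (Iic t) := by
    intro a t
    rw [heqf a]
    exact ((LP.integrableOn_exp_mul γB t hγB).const_mul _).add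
      ((LP.integrableOn_exp_mul (γB-γ) t hγγ').const_mul _)
  -- Part 1
  have part1 : ∀ t ≤ (0:ℝ), IntegrableOn
      (fun s => mApply (expM B (t - s)) (g (u s + η s) (v s + ξ s))) (Iic t) volume := by
    intro t ht
    refine Integrable.mono' (hbint t t)
      ((hintc t ht).aestronglyMeasurable measurableSet_Iic) ?_
    exact (ae_restrict_iff' measurableSet_Iic).2 (ae_of_all _ fun s hs => hbnd t ht s hs)
  -- value of the bound integral
  have hval : ∀ t : ℝ, ∫ s in Iic t,
      Real.exp (-γB*(t-s)) * (Lg * (Cg + Real.exp (-(γ*s)) * Mt)) =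
        Lg*Cg/γB + Lg*Mt*Real.exp (-(γ*t))/(γB-γ) := by
    intro t
    rw [heqf t]
    rw [integral_add ((LP.integrableOn_exp_mul γB t hγB).const_mul _)
      ((LP.integrableOn_exp_mul (γB-γ) t hγγ').const_mul _)]
    rw [integral_const_mul, integral_const_mul, LP.integral_exp_mul γB t hγB,
      LP.integral_exp_mul (γB-γ) t hγγ']
    have eA : Real.exp (-γB*t) * Real.exp (γB*t) = 1 := by
      rw [← Real.exp_add, show -γB*t + γB*t = 0 by ring, Real.exp_zero]
    have eB : Real.exp (-γB*t) * Real.exp ((γB-γ)*t) = Real.exp (-(γ*t)) := by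
      rw [← Real.exp_add]; congr 1; ring
    linear_combination (Lg*Cg/γB) * eA + (Lg*Mt/(γB-γ)) * eB
  -- Part 3
  have part3 : ∀ t ≤ (0:ℝ), Real.exp (γ * t) * ‖KB B g η ξ u v t‖ ≤
      (Lg * Cg / γB + Lg / (γB - γ) * (cNorm γ η + cNorm γ ξ)) +
        Lg / (γB - γ) * (cNorm γ u + cNorm γ v) := by
    intro t ht
    have hb : ‖KB B g η ξ u v t‖ ≤ ∫ s in Iic t,
        Real.exp (-γB*(t-s)) * (Lg * (Cg + Real.exp (-(γ*s)) * Mt)) := by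
      unfold KB
      exact norm_integral_le_of_norm_le (hbint t t)
        ((ae_restrict_iff' measurableSet_Iic).2 (ae_of_all _ fun s hs => hbnd t ht s hs))
    rw [hval t] at hb
    have eC : Real.exp (γ*t) * Real.exp (-(γ*t)) = 1 := by
      rw [← Real.exp_add, show γ*t + -(γ*t) = 0 by ring, Real.exp_zero]
    have hexp_le : Real.exp (γ*t) ≤ 1 := by
      rw [show (1:ℝ) = Real.exp 0 by simp]
      exact Real.exp_le_exp.2 (by nlinarith)
    have step1 : Real.exp (γ*t) * ‖KB B g η ξ u v t‖ ≤
        Real.exp (γ*t) * (Lg*Cg/γB) + Lg*Mt/(γB-γ) := by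
      have h := mul_le_mul_of_nonneg_left hb (Real.exp_pos (γ*t)).le
      calc Real.exp (γ*t) * ‖KB B g η ξ u v t‖
          ≤ Real.exp (γ*t) * (Lg*Cg/γB + Lg*Mt*Real.exp (-(γ*t))/(γB-γ)) := h
      _ = Real.exp (γ*t) * (Lg*Cg/γB)
            + (Real.exp (γ*t) * Real.exp (-(γ*t))) * (Lg*Mt/(γB-γ)) := by ring
      _ = Real.exp (γ*t) * (Lg*Cg/γB) + Lg*Mt/(γB-γ) := by rw [eC]; ring
    have h3 : Real.exp (γ*t) * (Lg*Cg/γB) ≤ Lg*Cg/γB :=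
      mul_le_of_le_one_left (by positivity) hexp_le
    have h4 : Lg*Mt/(γB-γ) = Lg/(γB-γ)*(cNorm γ η + cNorm γ ξ)
        + Lg/(γB-γ)*(cNorm γ u + cNorm γ v) := by
      rw [hMt]; ring
    linarith
  -- Part 2 : continuity
  have part2 : ContinuousOn (KB B g η ξ u v) (Iic 0) := by
    set Fn : ℝ → ℝ → Vec n := fun t s => (Iic t).indicator
      (fun s' => mApply (expM B (t - s')) (g (u s' + η s') (v s' + ξ s'))) s with hFn
    have hKBeq : ∀ t : ℝ, KB B g η ξ u v t = ∫ s, Fn t s := by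
      intro t
      unfold KB
      simp only [hFn]
      rw [integral_indicator measurableSet_Iic]
    have hc : ContinuousOn (fun t => ∫ s, Fn t s) (Iic 0) := by
      intro t₀ ht₀
      apply continuousWithinAt_of_dominated
        (bound := (Iic (0:ℝ)).indicator fun s =>
          Real.exp (-γB*((t₀-1)-s)) * (Lg * (Cg + Real.exp (-(γ*s)) * Mt)))
      · filter_upwards [self_mem_nhdsWithin] with t ht
        simp only [hFn]
        apply (aestronglyMeasurable_indicator_iff measurableSet_Iic).2
        exact (hintc t ht).aestronglyMeasurable measurableSet_Iic
      · filter_upwards [self_mem_nhdsWithin,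
          mem_nhdsWithin_of_mem_nhds (Ioi_mem_nhds (show t₀ - 1 < t₀ by linarith))]
            with t ht ht'
        refine ae_of_all _ fun s => ?_
        by_cases hs : s ∈ Iic t
        · simp only [hFn]
          rw [indicator_of_mem hs]
          have hs0 : s ∈ Iic (0:ℝ) := mem_Iic.2 (le_trans (mem_Iic.1 hs) ht)
          rw [indicator_of_mem hs0]
          calc ‖mApply (expM B (t - s)) (g (u s + η s) (v s + ξ s))‖
              ≤ Real.exp (-γB*(t-s)) * (Lg * (Cg + Real.exp (-(γ*s)) * Mt)) :=
                hbnd t ht s hs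
          _ ≤ Real.exp (-γB*((t₀-1)-s)) * (Lg * (Cg + Real.exp (-(γ*s)) * Mt)) := by
                have hnn : 0 ≤ Lg * (Cg + Real.exp (-(γ*s)) * Mt) :=
                  mul_nonneg hLg.le (add_nonneg hCg.le
                    (mul_nonneg (Real.exp_pos _).le hMt0))
                have hexple : Real.exp (-γB*(t-s)) ≤ Real.exp (-γB*((t₀-1)-s)) := by
                  apply Real.exp_le_exp.2
                  have h5 : t₀ - 1 ≤ t := le_of_lt ht'
                  nlinarith
                exact mul_le_mul_of_nonneg_right hexple hnn
        · simp only [hFn]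
          rw [indicator_of_notMem hs]
          simp only [norm_zero]
          apply indicator_nonneg
          intro s' _
          exact hbnd_nonneg _ _
      · exact (integrable_indicator_iff measurableSet_Iic).2 (hbint (t₀-1) 0)
      · have hae : ∀ᵐ s : ℝ, s ≠ t₀ := by
          rw [ae_iff]
          have : {a : ℝ | ¬a ≠ t₀} = {t₀} := by ext x; simp
          rw [this]
          exact measure_singleton t₀
        filter_upwards [hae] with s hsne
        rcases lt_or_gt_of_ne hsne with hlt | hgt
        · have hct : ContinuousWithinAt
              (fun t => mApply (expM B (t - s)) (g (u s + η s) (v s + ξ s))) (Iic 0) t₀ := by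
            apply Continuous.continuousWithinAt
            have hpair : Continuous fun t : ℝ =>
                ((expM B (t - s), g (u s + η s) (v s + ξ s)) :
                  Matrix (Fin n) (Fin n) ℝ × Vec n) :=
              (hexpC.comp (continuous_id.sub continuous_const)).prodMk continuous_const
            apply Continuous.comp happ hpair
          apply hct.congr_of_eventuallyEq
          · filter_upwards [mem_nhdsWithin_of_mem_nhds (Ioi_mem_nhds hlt)] with t ht
            simp only [hFn]
            exact indicator_of_mem (mem_Iic.2 (le_of_lt (mem_Ioi.1 ht))) _
          · simp only [hFn]
            exact indicator_of_mem (mem_Iic.2 hlt.le) _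
        · have hct : ContinuousWithinAt (fun _ : ℝ => (0 : Vec n)) (Iic 0) t₀ :=
            continuousWithinAt_const
          apply hct.congr_of_eventuallyEq
          · filter_upwards [mem_nhdsWithin_of_mem_nhds (Iio_mem_nhds hgt)] with t ht
            simp only [hFn]
            exact indicator_of_notMem (by simp only [mem_Iic, not_le]; exact ht) _
          · simp only [hFn]
            exact indicator_of_notMem (by simp only [mem_Iic, not_le]; exact hgt) _
    exact hc.congr fun t _ => hKBeq t
  exact ⟨part1, part2, part3⟩
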